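/- Let k be a commutative ring, A a k-algebra, α: A → A an algebra automorphism and β: A → A an (α, α²)-derivation, i.e., β(ab) = β(a)·α²(b) + α(a)·β(b). Define α_0 = 0, α_1 = α, and α_j = (β∘α^{-1})^{j-2}∘β for j ≥ 2. If β∘α^{-1} is locally nilpotent (for each a ∈ A there is n with (β∘α^{-1})^n(a) = 0), then s(Y ⊗ a) = Σ_{j≥0} α_j(a) ⊗ Y^j defines a twisting map s: k[Y] ⊗ A → A ⊗ k[Y]. -/

import Mathlib

open TensorProduct

/-- A twisting map `s : B ⊗ A → A ⊗ B`: it is compatible with the units and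
with the multiplications of `A` and `B` (stated on pure tensors, which
suffices by linearity). -/
structure IsTwistingMap (k A B : Type*) [CommRing k] [Ring A] [Ring B]
    [Algebra k A] [Algebra k B] (s : B ⊗[k] A →ₗ[k] A ⊗[k] B) : Prop where
  unit_left : ∀ a : A, s (1 ⊗ₜ a) = a ⊗ₜ 1
  unit_right : ∀ b : B, s (b ⊗ₜ 1) = 1 ⊗ₜ b
  mul_compat_B : ∀ (b b' : B) (a : A),
    s ((b * b') ⊗ₜ a) =
      (LinearMap.lTensor A (LinearMap.mul' k B))
        ((TensorProduct.assoc k A B B)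
          ((LinearMap.rTensor B s)
            ((TensorProduct.assoc k B A B).symm
              ((LinearMap.lTensor B s)
                ((TensorProduct.assoc k B B A) ((b ⊗ₜ b') ⊗ₜ a))))))
  mul_compat_A : ∀ (b : B) (a a' : A),
    s (b ⊗ₜ (a * a')) =
      (LinearMap.rTensor B (LinearMap.mul' k A))
        ((TensorProduct.assoc k A A B).symm
          ((LinearMap.lTensor A s)
            ((TensorProduct.assoc k A B A)
              ((LinearMap.rTensor A s)
                ((TensorProduct.assoc k B A A).symm (b ⊗ₜ (a ⊗ₜ a')))))))

set_option maxHeartbeats 1000000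
set_option synthInstance.maxHeartbeats 400000

open Polynomial

section Aux
variable {k A : Type*} [CommRing k] [Ring A] [Algebra k A]
variable (α : A ≃ₐ[k] A) (β : A →ₗ[k] A)

/-- δ = β ∘ α⁻¹ -/
def TwD : Module.End k A := β ∘ₗ α.symm.toLinearMap

lemma TwD_apply (a : A) : TwD α β a = β (α.symm a) := rfl

lemma TwD_alpha (a : A) : TwD α β (α a) = β a := by
  simp [TwD_apply]

lemma beta_one (hβ : ∀ a b : A, β (a * b) = β a * α (α b) + α a * β b) : β 1 = 0 := by
  have h := hβ 1 1
  simp only [mul_one, one_mul, map_one] at h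
  exact (add_eq_left.mp h.symm)

lemma TwD_one (hβ : ∀ a b : A, β (a * b) = β a * α (α b) + α a * β b) : TwD α β 1 = 0 := by
  simp [TwD_apply, beta_one α β hβ]

lemma TwD_mul (hβ : ∀ a b : A, β (a * b) = β a * α (α b) + α a * β b) (x y : A) :
    TwD α β (x * y) = TwD α β x * α y + x * TwD α β y := by
  have h := hβ (α.symm x) (α.symm y)
  simp only [TwD_apply, map_mul]
  rw [h, AlgEquiv.apply_symm_apply, AlgEquiv.apply_symm_apply]

lemma TwD_pow_succ_apply (n : ℕ) (a : A) :
    ((TwD α β ^ (n + 1) : Module.End k A) : A →ₗ[k] A) a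
      = TwD α β (((TwD α β ^ n : Module.End k A) : A →ₗ[k] A) a) := by
  rw [pow_succ', Module.End.mul_apply]

lemma TwD_pow_succ_apply' (n : ℕ) (a : A) :
    ((TwD α β ^ (n + 1) : Module.End k A) : A →ₗ[k] A) a
      = ((TwD α β ^ n : Module.End k A) : A →ₗ[k] A) (TwD α β a) := by
  rw [pow_succ, Module.End.mul_apply]

/-- the twisted Leibniz rule for powers of δ -/
lemma TwD_leibniz (hβ : ∀ a b : A, β (a * b) = β a * α (α b) + α a * β b) (m : ℕ) (b d : A) :
    ((TwD α β ^ m : Module.End k A) : A →ₗ[k] A) (b * d)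
      = b * ((TwD α β ^ m : Module.End k A) : A →ₗ[k] A) d
        + ∑ q ∈ Finset.range m,
            ((TwD α β ^ (m - 1 - q) : Module.End k A) : A →ₗ[k] A)
              (TwD α β b * α (((TwD α β ^ q : Module.End k A) : A →ₗ[k] A) d)) := by
  induction m with
  | zero => simp
  | succ m ih =>
    rw [TwD_pow_succ_apply, ih, map_add, TwD_mul α β hβ, map_sum]
    rw [Finset.sum_range_succ]
    have h1 : ∀ q ∈ Finset.range m,
        TwD α β (((TwD α β ^ (m - 1 - q) : Module.End k A) : A →ₗ[k] A)
          (TwD α β b * α (((TwD α β ^ q : Module.End k A) : A →ₗ[k] A) d)))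
        = ((TwD α β ^ (m + 1 - 1 - q) : Module.End k A) : A →ₗ[k] A)
          (TwD α β b * α (((TwD α β ^ q : Module.End k A) : A →ₗ[k] A) d)) := by
      intro q hq
      rw [Finset.mem_range] at hq
      have h : m + 1 - 1 - q = (m - 1 - q) + 1 := by omega
      rw [h, TwD_pow_succ_apply]
    rw [Finset.sum_congr rfl h1]
    have h2 : m + 1 - 1 - m = 0 := by omega
    rw [h2, pow_zero]
    simp only [Module.End.one_apply, TwD_pow_succ_apply]
    abel

/-- the family α_j : α_0 = 0, α_{n+1} = δ^n ∘ α. -/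
def TwPhi : ℕ → A →ₗ[k] A
  | 0 => 0
  | (n + 1) => ((TwD α β ^ n : Module.End k A) : A →ₗ[k] A) ∘ₗ α.toLinearMap

lemma TwPhi_zero_apply (a : A) : TwPhi α β 0 a = 0 := rfl

lemma TwPhi_succ_apply (n : ℕ) (a : A) :
    TwPhi α β (n + 1) a = ((TwD α β ^ n : Module.End k A) : A →ₗ[k] A) (α a) := rfl

lemma TwPhi_one_apply (a : A) : TwPhi α β 1 a = α a := by
  rw [TwPhi_succ_apply, pow_zero, Module.End.one_apply]

lemma TwD_pow_vanish {y : A} {n : ℕ} (h : ((TwD α β ^ n : Module.End k A) : A →ₗ[k] A) y = 0)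
    {m : ℕ} (hm : n ≤ m) : ((TwD α β ^ m : Module.End k A) : A →ₗ[k] A) y = 0 := by
  obtain ⟨t, rfl⟩ : ∃ t, m = t + n := ⟨m - n, by omega⟩
  rw [pow_add, Module.End.mul_apply, h, map_zero]

lemma TwPhi_vanish_of {x : A} {N : ℕ}
    (h : ((TwD α β ^ N : Module.End k A) : A →ₗ[k] A) (α x) = 0) :
    ∀ j, N + 1 ≤ j → TwPhi α β j x = 0 := by
  intro j hj
  obtain ⟨j', rfl⟩ : ∃ j', j = j' + 1 := ⟨j - 1, by omega⟩
  rw [TwPhi_succ_apply]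
  exact TwD_pow_vanish α β h (by omega)

lemma TwPhi_bound
    (hnilp : ∀ a : A, ∃ n : ℕ, ((TwD α β ^ n : Module.End k A) : A →ₗ[k] A) a = 0) (a : A) :
    ∃ n : ℕ, ∀ j, n ≤ j → TwPhi α β j a = 0 := by
  obtain ⟨N, hN⟩ := hnilp (α a)
  exact ⟨N + 1, TwPhi_vanish_of α β hN⟩

variable (hex : ∀ a : A, ∃ n : ℕ, ∀ j, n ≤ j → TwPhi α β j a = 0)

/-- σ as a polynomial with coefficients φ_j a -/
noncomputable def sigmaP : A →ₗ[k] A[X] where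
  toFun a := ⟨AddMonoidAlgebra.ofCoeff (Finsupp.onFinset (Finset.range (Classical.choose (hex a)))
      (fun j => TwPhi α β j a)
      (fun j hj => Finset.mem_range.mpr (by
        by_contra h
        exact hj (Classical.choose_spec (hex a) j (by omega)))))⟩
  map_add' a b := by
    apply Polynomial.ext
    intro n
    show TwPhi α β n (a + b) = (_ + _ : A[X]).coeff n
    rw [Polynomial.coeff_add, map_add]
    rfl
  map_smul' c a := by
    apply Polynomial.ext
    intro n
    show TwPhi α β n (c • a) = (c • (_ : A[X])).coeff n
    rw [Polynomial.coeff_smul, map_smul]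
    rfl

lemma coeff_sigmaP (a : A) (n : ℕ) : (sigmaP α β hex a).coeff n = TwPhi α β n a := rfl

lemma sigmaP_eq_sum {a : A} {n : ℕ} (h : ∀ j, n ≤ j → TwPhi α β j a = 0) :
    sigmaP α β hex a = ∑ j ∈ Finset.range n, C (TwPhi α β j a) * X ^ j := by
  apply Polynomial.ext
  intro i
  rw [coeff_sigmaP, Polynomial.finset_sum_coeff]
  simp only [Polynomial.coeff_C_mul, Polynomial.coeff_X_pow, mul_ite, mul_one, mul_zero]
  rw [Finset.sum_ite_eq (Finset.range n) i (fun j => TwPhi α β j a)]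
  by_cases hi : i ∈ Finset.range n
  · rw [if_pos hi]
  · rw [if_neg hi]
    exact h i (by simpa [Finset.mem_range, not_lt] using hi)

lemma sum_range_ext {G : ℕ → A} {n n' : ℕ} (hn : n ≤ n') (h : ∀ j, n ≤ j → G j = 0) :
    ∑ j ∈ Finset.range n', G j = ∑ j ∈ Finset.range n, G j :=
  (Finset.sum_subset (Finset.range_subset_range.mpr hn)
    (fun j _ hj => h j (by simpa [Finset.mem_range, not_lt] using hj))).symm

lemma coreP (hβ : ∀ a b : A, β (a * b) = β a * α (α b) + α a * β b)
    (x c : A) {M : ℕ} (hM : ∀ j, M ≤ j → TwPhi α β j c = 0) :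
    sigmaP α β hex (x * c)
      = (∑ j ∈ Finset.range M, C (α x * TwPhi α β j c) * X ^ j)
        + ∑ j ∈ Finset.range M, (sigmaP α β hex (α.symm (β x) * TwPhi α β j c)) * X ^ j := by
  apply Polynomial.ext
  intro i
  rw [coeff_sigmaP, Polynomial.coeff_add, Polynomial.finset_sum_coeff,
    Polynomial.finset_sum_coeff]
  have e1 : (∑ j ∈ Finset.range M, (C (α x * TwPhi α β j c) * X ^ j).coeff i)
      = α x * TwPhi α β i c := by
    simp only [Polynomial.coeff_C_mul, Polynomial.coeff_X_pow, mul_ite, mul_one, mul_zero]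
    rw [Finset.sum_ite_eq (Finset.range M) i (fun j => α x * TwPhi α β j c)]
    by_cases hi : i ∈ Finset.range M
    · rw [if_pos hi]
    · rw [if_neg hi, hM i (by simpa [Finset.mem_range, not_lt] using hi), mul_zero]
  have e2 : (∑ j ∈ Finset.range M,
        ((sigmaP α β hex (α.symm (β x) * TwPhi α β j c)) * X ^ j).coeff i)
      = ∑ j ∈ Finset.range M, TwPhi α β (i - j) (α.symm (β x) * TwPhi α β j c) := by
    apply Finset.sum_congr rfl
    intro j _
    rw [Polynomial.coeff_mul_X_pow', coeff_sigmaP]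
    by_cases hj : j ≤ i
    · rw [if_pos hj]
    · rw [if_neg hj]
      have : i - j = 0 := by omega
      rw [this, TwPhi_zero_apply]
  rw [e1, e2]
  -- now a pure coefficient identity
  cases i with
  | zero =>
    simp [TwPhi_zero_apply, Nat.zero_sub]
  | succ m =>
    rw [TwPhi_succ_apply, map_mul, TwD_leibniz α β hβ m (α x) (α c)]
    congr 1
    -- sums
    set G : ℕ → A := fun j => TwPhi α β (m + 1 - j) (α.symm (β x) * TwPhi α β j c) with hG
    have hGM : ∀ j, M ≤ j → G j = 0 := by
      intro j hj
      simp only [hG, hM j hj, mul_zero, map_zero]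
    have hGm : ∀ j, m + 1 ≤ j → G j = 0 := by
      intro j hj
      have : m + 1 - j = 0 := by omega
      simp only [hG, this, TwPhi_zero_apply]
    have hbig : ∑ j ∈ Finset.range M, G j = ∑ j ∈ Finset.range (m + 1), G j := by
      rw [← sum_range_ext (show M ≤ M + (m+1) by omega) hGM,
        sum_range_ext (show (m+1) ≤ M + (m+1) by omega) hGm]
    rw [show (∑ j ∈ Finset.range M, TwPhi α β (m + 1 - j) (α.symm (β x) * TwPhi α β j c))
        = ∑ j ∈ Finset.range M, G j from rfl, hbig, Finset.sum_range_succ']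
    have hG0 : G 0 = 0 := by
      simp only [hG, TwPhi_zero_apply, mul_zero, map_zero]
    rw [hG0, add_zero]
    apply (Finset.sum_congr rfl _).symm
    intro q hq
    rw [Finset.mem_range] at hq
    have h1 : m + 1 - (q + 1) = (m - 1 - q) + 1 := by omega
    simp only [hG, h1, TwPhi_succ_apply, TwPhi_succ_apply]
    rw [map_mul, AlgEquiv.apply_symm_apply, TwD_alpha]


noncomputable def sigmaT : A →ₗ[k] A ⊗[k] k[X] :=
  (polyEquivTensor k A).toLinearMap ∘ₗ sigmaP α β hex

lemma sigmaT_apply (a : A) : sigmaT α β hex a = polyEquivTensor k A (sigmaP α β hex a) := rfl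

lemma psi_monomial (y : A) (j : ℕ) :
    polyEquivTensor k A (C y * X ^ j) = y ⊗ₜ[k] ((X : k[X]) ^ j) := by
  rw [Polynomial.C_mul_X_pow_eq_monomial, polyEquivTensor_apply, Polynomial.eval₂_monomial,
    Algebra.TensorProduct.tmul_pow, one_pow]
  simp [Algebra.TensorProduct.includeLeft_apply, Algebra.TensorProduct.tmul_mul_tmul]

lemma psi_X : polyEquivTensor k A (X : A[X]) = (1 : A) ⊗ₜ[k] (X : k[X]) := by
  have := psi_monomial (k := k) (1 : A) 1
  simpa using this

lemma psi_mul_Xpow (p : A[X]) (j : ℕ) :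
    polyEquivTensor k A (p * X ^ j)
      = polyEquivTensor k A p * ((1 : A) ⊗ₜ[k] ((X : k[X]) ^ j)) := by
  rw [map_mul, map_pow, psi_X, Algebra.TensorProduct.tmul_pow, one_pow]

lemma sigmaT_eq_sum {a : A} {n : ℕ} (h : ∀ j, n ≤ j → TwPhi α β j a = 0) :
    sigmaT α β hex a = ∑ j ∈ Finset.range n, TwPhi α β j a ⊗ₜ[k] ((X : k[X]) ^ j) := by
  rw [sigmaT_apply, sigmaP_eq_sum α β hex h, map_sum]
  exact Finset.sum_congr rfl (fun j _ => psi_monomial _ _)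

lemma sigmaT_one (hβ : ∀ a b : A, β (a * b) = β a * α (α b) + α a * β b) :
    sigmaT α β hex 1 = (1 : A) ⊗ₜ[k] (X : k[X]) := by
  have h2 : ∀ j, 2 ≤ j → TwPhi α β j 1 = 0 := by
    intro j hj
    obtain ⟨j', rfl⟩ : ∃ j', j = j' + 2 := ⟨j - 2, by omega⟩
    rw [TwPhi_succ_apply, map_one, TwD_pow_succ_apply', TwD_one α β hβ, map_zero]
  rw [sigmaT_eq_sum α β hex h2]
  rw [Finset.sum_range_succ, Finset.sum_range_one]
  simp [TwPhi_zero_apply, TwPhi_one_apply]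

noncomputable def TT : A ⊗[k] k[X] →ₗ[k] A ⊗[k] k[X] :=
  TensorProduct.lift (LinearMap.mk₂ k
    (fun a p => sigmaT α β hex a * ((1 : A) ⊗ₜ[k] p))
    (fun a a' p => by rw [map_add, add_mul])
    (fun c a p => by rw [map_smul, smul_mul_assoc])
    (fun a p p' => by rw [tmul_add, mul_add])
    (fun c a p => by rw [tmul_smul, mul_smul_comm]))

lemma TT_tmul (a : A) (p : k[X]) :
    TT α β hex (a ⊗ₜ p) = sigmaT α β hex a * ((1 : A) ⊗ₜ[k] p) := rfl

lemma TT_mul_right (z : A ⊗[k] k[X]) (p : k[X]) :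
    TT α β hex (z * ((1 : A) ⊗ₜ[k] p)) = TT α β hex z * ((1 : A) ⊗ₜ[k] p) := by
  induction z using TensorProduct.induction_on with
  | zero => rw [zero_mul, map_zero, zero_mul]
  | tmul a q =>
    rw [Algebra.TensorProduct.tmul_mul_tmul, mul_one, TT_tmul, TT_tmul,
      show (1 : A) ⊗ₜ[k] (q * p) = ((1 : A) ⊗ₜ[k] q) * ((1 : A) ⊗ₜ[k] p) by
        rw [Algebra.TensorProduct.tmul_mul_tmul, one_mul],
      mul_assoc]
  | add u v hu hv => rw [add_mul, map_add, map_add, add_mul, hu, hv]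

lemma TT_pow_mul_right (m : ℕ) (z : A ⊗[k] k[X]) (p : k[X]) :
    ((TT α β hex ^ m : Module.End k (A ⊗[k] k[X])) : A ⊗[k] k[X] →ₗ[k] A ⊗[k] k[X])
        (z * ((1 : A) ⊗ₜ[k] p))
      = ((TT α β hex ^ m : Module.End k (A ⊗[k] k[X])) : A ⊗[k] k[X] →ₗ[k] A ⊗[k] k[X]) z
          * ((1 : A) ⊗ₜ[k] p) := by
  induction m generalizing z with
  | zero => rw [pow_zero, Module.End.one_apply, Module.End.one_apply]
  | succ m ih =>
    rw [pow_succ, Module.End.mul_apply, Module.End.mul_apply, TT_mul_right, ih]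

lemma aeval_TT_mul_right (b : k[X]) (z : A ⊗[k] k[X]) (p : k[X]) :
    (Polynomial.aeval (TT α β hex) b : Module.End k (A ⊗[k] k[X])) (z * ((1 : A) ⊗ₜ[k] p))
      = (Polynomial.aeval (TT α β hex) b : Module.End k (A ⊗[k] k[X])) z
          * ((1 : A) ⊗ₜ[k] p) := by
  induction b using Polynomial.induction_on' with
  | add f g hf hg => rw [map_add, LinearMap.add_apply, LinearMap.add_apply, hf, hg, add_mul]
  | monomial n c =>
    rw [Polynomial.aeval_monomial, Module.End.mul_apply, Module.End.mul_apply,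
      Module.algebraMap_end_apply, Module.algebraMap_end_apply, TT_pow_mul_right,
      smul_mul_assoc]

lemma TT_pow_one_one (hβ : ∀ a b : A, β (a * b) = β a * α (α b) + α a * β b) (m : ℕ) :
    ((TT α β hex ^ m : Module.End k (A ⊗[k] k[X])) : A ⊗[k] k[X] →ₗ[k] A ⊗[k] k[X])
        ((1 : A) ⊗ₜ[k] (1 : k[X]))
      = (1 : A) ⊗ₜ[k] ((X : k[X]) ^ m) := by
  induction m with
  | zero => rw [pow_zero, Module.End.one_apply, pow_zero]
  | succ m ih =>
    rw [pow_succ', Module.End.mul_apply, ih, TT_tmul, sigmaT_one α β hex hβ,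
      Algebra.TensorProduct.tmul_mul_tmul, one_mul, ← pow_succ']


lemma TwPhi_shift (x : A) (j : ℕ) :
    TwPhi α β (j + 1) (α.symm (β x)) = TwPhi α β (j + 2) x := by
  rw [TwPhi_succ_apply, TwPhi_succ_apply, AlgEquiv.apply_symm_apply,
    show ((j:ℕ) + 1) = j + 1 from rfl, TwD_pow_succ_apply', TwD_alpha]

lemma claimT_sigma (hβ : ∀ a b : A, β (a * b) = β a * α (α b) + α a * β b) (x c : A) :
    sigmaT α β hex (x * c)
      = (α x ⊗ₜ[k] (1 : k[X])) * sigmaT α β hex c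
        + TT α β hex ((α.symm (β x) ⊗ₜ[k] (1 : k[X])) * sigmaT α β hex c) := by
  obtain ⟨M, hM⟩ := hex c
  rw [sigmaT_apply, coreP α β hex hβ x c hM, map_add, map_sum, map_sum]
  rw [sigmaT_eq_sum α β hex hM, Finset.mul_sum, Finset.mul_sum, map_sum]
  congr 1
  · exact Finset.sum_congr rfl (fun j _ => by
      rw [psi_monomial, Algebra.TensorProduct.tmul_mul_tmul, one_mul])
  · exact Finset.sum_congr rfl (fun j _ => by
      rw [psi_mul_Xpow, Algebra.TensorProduct.tmul_mul_tmul, one_mul, TT_tmul,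
        sigmaT_apply])

lemma claimT (hβ : ∀ a b : A, β (a * b) = β a * α (α b) + α a * β b) (x : A)
    (w : A ⊗[k] k[X]) :
    TT α β hex ((x ⊗ₜ[k] (1 : k[X])) * w)
      = (α x ⊗ₜ[k] (1 : k[X])) * TT α β hex w
        + TT α β hex ((α.symm (β x) ⊗ₜ[k] (1 : k[X])) * TT α β hex w) := by
  induction w using TensorProduct.induction_on with
  | zero => simp
  | tmul c q =>
    rw [Algebra.TensorProduct.tmul_mul_tmul, one_mul, TT_tmul, TT_tmul,
      ← mul_assoc, ← mul_assoc, TT_mul_right, ← add_mul, ← claimT_sigma α β hex hβ]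
  | add u v hu hv =>
    rw [mul_add, map_add, map_add, mul_add, mul_add, map_add, hu, hv]
    abel

lemma coreT (hβ : ∀ a b : A, β (a * b) = β a * α (α b) + α a * β b) (N : ℕ) :
    ∀ (x : A), ((TwD α β ^ N : Module.End k A) : A →ₗ[k] A) (α x) = 0 →
    ∀ w : A ⊗[k] k[X],
    TT α β hex ((x ⊗ₜ[k] (1 : k[X])) * w)
      = ∑ j ∈ Finset.range (N + 1),
          (TwPhi α β j x ⊗ₜ[k] (1 : k[X]))
            * ((TT α β hex ^ j : Module.End k (A ⊗[k] k[X])) :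
                A ⊗[k] k[X] →ₗ[k] A ⊗[k] k[X]) w := by
  induction N with
  | zero =>
    intro x hx w
    rw [pow_zero, Module.End.one_apply] at hx
    have hx0 : x = 0 := by
      have := congrArg α.symm hx
      simpa using this
    subst hx0
    simp [TwPhi_zero_apply]
  | succ N ih =>
    intro x hx w
    have hx' : ((TwD α β ^ N : Module.End k A) : A →ₗ[k] A) (α (α.symm (β x))) = 0 := by
      rw [AlgEquiv.apply_symm_apply, ← TwD_alpha α β x, ← TwD_pow_succ_apply']
      exact hx
    rw [claimT α β hex hβ x w, ih _ hx' (TT α β hex w)]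
    -- reorganize sums
    rw [Finset.sum_range_succ' (fun j =>
      (TwPhi α β j x ⊗ₜ[k] (1 : k[X]))
        * ((TT α β hex ^ j : Module.End k (A ⊗[k] k[X])) :
            A ⊗[k] k[X] →ₗ[k] A ⊗[k] k[X]) w) (N + 1)]
    rw [Finset.sum_range_succ' (fun j =>
      (TwPhi α β j (α.symm (β x)) ⊗ₜ[k] (1 : k[X]))
        * ((TT α β hex ^ j : Module.End k (A ⊗[k] k[X])) :
            A ⊗[k] k[X] →ₗ[k] A ⊗[k] k[X]) (TT α β hex w)) N]
    rw [Finset.sum_range_succ' (fun j =>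
      (TwPhi α β (j + 1) x ⊗ₜ[k] (1 : k[X]))
        * ((TT α β hex ^ (j + 1) : Module.End k (A ⊗[k] k[X])) :
            A ⊗[k] k[X] →ₗ[k] A ⊗[k] k[X]) w) N]
    simp only [TwPhi_zero_apply, zero_tmul, zero_mul, add_zero]
    have e0 : ∀ j : ℕ, ((TT α β hex ^ j : Module.End k (A ⊗[k] k[X])) :
        A ⊗[k] k[X] →ₗ[k] A ⊗[k] k[X]) (TT α β hex w)
        = ((TT α β hex ^ (j + 1) : Module.End k (A ⊗[k] k[X])) :
            A ⊗[k] k[X] →ₗ[k] A ⊗[k] k[X]) w := by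
      intro j
      rw [pow_succ, Module.End.mul_apply]
    have e1 : ∀ j ∈ Finset.range N,
        (TwPhi α β (j + 1) (α.symm (β x)) ⊗ₜ[k] (1 : k[X]))
          * ((TT α β hex ^ (j + 1) : Module.End k (A ⊗[k] k[X])) :
              A ⊗[k] k[X] →ₗ[k] A ⊗[k] k[X]) (TT α β hex w)
        = (TwPhi α β (j + 1 + 1) x ⊗ₜ[k] (1 : k[X]))
            * ((TT α β hex ^ (j + 1 + 1) : Module.End k (A ⊗[k] k[X])) :
                A ⊗[k] k[X] →ₗ[k] A ⊗[k] k[X]) w := by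
      intro j _
      rw [TwPhi_shift, e0 (j + 1)]
    rw [Finset.sum_congr rfl e1]
    simp only [zero_add, pow_one, TwPhi_one_apply]
    abel


noncomputable def PsiMap (a' : A) : A ⊗[k] k[X] →ₗ[k] A ⊗[k] k[X] :=
  TensorProduct.lift (LinearMap.mk₂ k
    (fun x r => (x ⊗ₜ[k] (1 : k[X]))
      * (Polynomial.aeval (TT α β hex) r : Module.End k (A ⊗[k] k[X])) (a' ⊗ₜ[k] (1 : k[X])))
    (fun x x' r => by rw [add_tmul, add_mul])
    (fun c x r => by rw [← smul_tmul', smul_mul_assoc])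
    (fun x r r' => by rw [map_add, LinearMap.add_apply, mul_add])
    (fun c x r => by rw [map_smul, LinearMap.smul_apply, mul_smul_comm]))

lemma PsiMap_tmul (a' x : A) (r : k[X]) :
    PsiMap α β hex a' (x ⊗ₜ r)
      = (x ⊗ₜ[k] (1 : k[X]))
        * (Polynomial.aeval (TT α β hex) r : Module.End k (A ⊗[k] k[X]))
            (a' ⊗ₜ[k] (1 : k[X])) := rfl

lemma PsiMap_comm_TT (hβ : ∀ a b : A, β (a * b) = β a * α (α b) + α a * β b) (a' : A)
    (z : A ⊗[k] k[X]) :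
    PsiMap α β hex a' (TT α β hex z) = TT α β hex (PsiMap α β hex a' z) := by
  induction z using TensorProduct.induction_on with
  | zero => simp only [map_zero]
  | add u v hu hv => simp only [map_add, hu, hv]
  | tmul x r =>
    obtain ⟨n, hn⟩ := hex x
    have hN : ((TwD α β ^ n : Module.End k A) : A →ₗ[k] A) (α x) = 0 := by
      have := hn (n + 1) (by omega)
      rwa [TwPhi_succ_apply] at this
    have hn' : ∀ j, n + 1 ≤ j → TwPhi α β j x = 0 := fun j hj => hn j (by omega)
    rw [PsiMap_tmul, TT_tmul, sigmaT_eq_sum α β hex hn', Finset.sum_mul, map_sum]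
    rw [coreT α β hex hβ n x hN]
    apply Finset.sum_congr rfl
    intro j _
    rw [Algebra.TensorProduct.tmul_mul_tmul, mul_one, PsiMap_tmul, map_mul, map_pow,
      Polynomial.aeval_X, Module.End.mul_apply]

lemma PsiMap_comm_pow (hβ : ∀ a b : A, β (a * b) = β a * α (α b) + α a * β b) (a' : A)
    (m : ℕ) (z : A ⊗[k] k[X]) :
    PsiMap α β hex a'
        (((TT α β hex ^ m : Module.End k (A ⊗[k] k[X])) :
          A ⊗[k] k[X] →ₗ[k] A ⊗[k] k[X]) z)
      = ((TT α β hex ^ m : Module.End k (A ⊗[k] k[X])) :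
          A ⊗[k] k[X] →ₗ[k] A ⊗[k] k[X]) (PsiMap α β hex a' z) := by
  induction m generalizing z with
  | zero => rw [pow_zero, Module.End.one_apply, Module.End.one_apply]
  | succ m ih =>
    rw [pow_succ, Module.End.mul_apply, Module.End.mul_apply, ih, PsiMap_comm_TT α β hex hβ]

lemma PsiMap_comm_aeval (hβ : ∀ a b : A, β (a * b) = β a * α (α b) + α a * β b) (a' : A)
    (b : k[X]) (z : A ⊗[k] k[X]) :
    PsiMap α β hex a'
        ((Polynomial.aeval (TT α β hex) b : Module.End k (A ⊗[k] k[X])) z)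
      = (Polynomial.aeval (TT α β hex) b : Module.End k (A ⊗[k] k[X]))
          (PsiMap α β hex a' z) := by
  induction b using Polynomial.induction_on' with
  | add f g hf hg => rw [map_add, LinearMap.add_apply, map_add, hf, hg, LinearMap.add_apply]
  | monomial m c =>
    rw [Polynomial.aeval_monomial, Module.End.mul_apply, Module.End.mul_apply,
      Module.algebraMap_end_apply, Module.algebraMap_end_apply, map_smul,
      PsiMap_comm_pow α β hex hβ]

noncomputable def sMap : k[X] ⊗[k] A →ₗ[k] A ⊗[k] k[X] :=
  TensorProduct.lift (LinearMap.mk₂ k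
    (fun (p : k[X]) (a : A) =>
      (Polynomial.aeval (TT α β hex) p : Module.End k (A ⊗[k] k[X])) (a ⊗ₜ[k] (1 : k[X])))
    (fun p p' a => by rw [map_add, LinearMap.add_apply])
    (fun c p a => by rw [map_smul, LinearMap.smul_apply])
    (fun p a a' => by rw [add_tmul, map_add])
    (fun c p a => by rw [← smul_tmul', map_smul]))

lemma sMap_tmul (p : k[X]) (a : A) :
    sMap α β hex (p ⊗ₜ a)
      = (Polynomial.aeval (TT α β hex) p : Module.End k (A ⊗[k] k[X]))
          (a ⊗ₜ[k] (1 : k[X])) := rfl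

lemma chainB_inner (u : A ⊗[k] k[X]) (r : k[X]) :
    (LinearMap.lTensor A (LinearMap.mul' k k[X]))
        ((TensorProduct.assoc k A k[X] k[X]) (u ⊗ₜ r))
      = u * ((1 : A) ⊗ₜ[k] r) := by
  induction u using TensorProduct.induction_on with
  | zero => simp only [zero_tmul, map_zero, zero_mul]
  | add u v hu hv => simp only [add_tmul, map_add, hu, hv, add_mul]
  | tmul y q =>
    rw [TensorProduct.assoc_tmul, LinearMap.lTensor_tmul, LinearMap.mul'_apply,
      Algebra.TensorProduct.tmul_mul_tmul, mul_one]

lemma chainB_outer (b : k[X]) (z : A ⊗[k] k[X]) :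
    (LinearMap.lTensor A (LinearMap.mul' k k[X]))
        ((TensorProduct.assoc k A k[X] k[X])
          ((LinearMap.rTensor k[X] (sMap α β hex))
            ((TensorProduct.assoc k k[X] A k[X]).symm (b ⊗ₜ z))))
      = (Polynomial.aeval (TT α β hex) b : Module.End k (A ⊗[k] k[X])) z := by
  induction z using TensorProduct.induction_on with
  | zero => simp only [tmul_zero, map_zero]
  | add u v hu hv => simp only [tmul_add, map_add, hu, hv]
  | tmul x r =>
    rw [TensorProduct.assoc_symm_tmul, LinearMap.rTensor_tmul, chainB_inner, sMap_tmul,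
      ← aeval_TT_mul_right,
      show (x ⊗ₜ[k] (1 : k[X])) * ((1 : A) ⊗ₜ[k] r) = x ⊗ₜ[k] r by
        rw [Algebra.TensorProduct.tmul_mul_tmul, mul_one, one_mul]]

lemma chainA_inner (x : A) (u : A ⊗[k] k[X]) :
    (LinearMap.rTensor k[X] (LinearMap.mul' k A))
        ((TensorProduct.assoc k A A k[X]).symm (x ⊗ₜ u))
      = (x ⊗ₜ[k] (1 : k[X])) * u := by
  induction u using TensorProduct.induction_on with
  | zero => simp only [tmul_zero, map_zero, mul_zero]
  | add u v hu hv => simp only [tmul_add, map_add, hu, hv, mul_add]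
  | tmul y q =>
    rw [TensorProduct.assoc_symm_tmul, LinearMap.rTensor_tmul, LinearMap.mul'_apply,
      Algebra.TensorProduct.tmul_mul_tmul, one_mul]

lemma chainA_outer (a' : A) (z : A ⊗[k] k[X]) :
    (LinearMap.rTensor k[X] (LinearMap.mul' k A))
        ((TensorProduct.assoc k A A k[X]).symm
          ((LinearMap.lTensor A (sMap α β hex))
            ((TensorProduct.assoc k A k[X] A) (z ⊗ₜ a'))))
      = PsiMap α β hex a' z := by
  induction z using TensorProduct.induction_on with
  | zero => simp only [zero_tmul, map_zero]
  | add u v hu hv => simp only [add_tmul, map_add, hu, hv]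
  | tmul x r =>
    rw [TensorProduct.assoc_tmul, LinearMap.lTensor_tmul, chainA_inner, sMap_tmul,
      PsiMap_tmul]

end Aux

open Polynomial in
theorem stmt11 (k A : Type*) [CommRing k] [Ring A] [Algebra k A]
    (α : A ≃ₐ[k] A) (β : A →ₗ[k] A)
    (hβ : ∀ a b : A, β (a * b) = β a * α (α b) + α a * β b)
    (hnilp : ∀ a : A, ∃ n : ℕ,
      (((β ∘ₗ α.symm.toLinearMap : Module.End k A) ^ n) : A →ₗ[k] A) a = 0)
    (αfam : ℕ → A →ₗ[k] A)
    (hfam0 : αfam 0 = 0) (hfam1 : αfam 1 = α.toLinearMap)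
    (hfam : ∀ j, 2 ≤ j → αfam j =
      ((((β ∘ₗ α.symm.toLinearMap : Module.End k A) ^ (j - 2)) : A →ₗ[k] A) ∘ₗ β)) :
    ∃ s : Polynomial k ⊗[k] A →ₗ[k] A ⊗[k] Polynomial k,
      IsTwistingMap k A (Polynomial k) s ∧
      ∀ a : A, ∃ n : ℕ, (∀ j, n ≤ j → αfam j a = 0) ∧
        s ((X : Polynomial k) ⊗ₜ a) =
          ∑ j ∈ Finset.range n, αfam j a ⊗ₜ ((X : Polynomial k) ^ j) := by
  classical
  have hex : ∀ a : A, ∃ n : ℕ, ∀ j, n ≤ j → TwPhi α β j a = 0 :=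
    TwPhi_bound α β hnilp
  have hfam_eq : ∀ j (a : A), αfam j a = TwPhi α β j a := by
    intro j a
    match j with
    | 0 => rw [hfam0]; rfl
    | 1 => rw [hfam1, TwPhi_one_apply]; rfl
    | (m+2) =>
      rw [hfam (m+2) (by omega)]
      show ((((β ∘ₗ α.symm.toLinearMap : Module.End k A) ^ (m + 2 - 2)) : A →ₗ[k] A) ∘ₗ β) a
        = TwPhi α β (m+2) a
      rw [TwPhi_succ_apply, TwD_pow_succ_apply', TwD_alpha, LinearMap.comp_apply]
      rfl
  refine ⟨sMap α β hex, ⟨?_, ?_, ?_, ?_⟩, ?_⟩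
  · intro a
    rw [sMap_tmul, map_one, Module.End.one_apply]
  · intro b
    rw [sMap_tmul]
    induction b using Polynomial.induction_on' with
    | add p q hp hq => rw [map_add, LinearMap.add_apply, hp, hq, tmul_add]
    | monomial n c =>
      rw [Polynomial.aeval_monomial, Module.End.mul_apply, Module.algebraMap_end_apply,
        TT_pow_one_one α β hex hβ, ← Polynomial.C_mul_X_pow_eq_monomial,
        ← Polynomial.smul_eq_C_mul, tmul_smul]
  · intro b b' a
    rw [TensorProduct.assoc_tmul, LinearMap.lTensor_tmul, chainB_outer, sMap_tmul,
      sMap_tmul, map_mul, Module.End.mul_apply]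
  · intro b a a'
    rw [TensorProduct.assoc_symm_tmul, LinearMap.rTensor_tmul, chainA_outer, sMap_tmul,
      sMap_tmul, PsiMap_comm_aeval α β hex hβ, PsiMap_tmul, map_one, Module.End.one_apply,
      Algebra.TensorProduct.tmul_mul_tmul, mul_one]
  · intro a
    obtain ⟨n, hn⟩ := hex a
    refine ⟨n, fun j hj => by rw [hfam_eq]; exact hn j hj, ?_⟩
    rw [sMap_tmul, Polynomial.aeval_X, TT_tmul, ← Algebra.TensorProduct.one_def, mul_one,
      sigmaT_eq_sum α β hex hn]
    exact (Finset.sum_congr rfl fun j _ => by rw [hfam_eq]).symm
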